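/- Let P be a right LCM monoid, and p, q, r ∈ P with r = qk. Then the idempotent [r,r] is fixed by [p,q] in the associated inverse semigroup (i.e., [p,q][r,r] = [r,r]) if and only if pk = r = qk. -/
import Mathlib


/-- The principal right ideal `pP` of a monoid. -/
def rI {M : Type*} [Monoid M] (p : M) : Set M := {x | ∃ y, x = p * y}

/-- A right LCM monoid: left cancellative, and any two principal right ideals are
either disjoint or intersect in another principal right ideal. -/
class RightLCM (M : Type*) extends Monoid M where
  mul_left_cancel' : ∀ a b c : M, a * b = a * c → b = c
  lcm : ∀ p q : M, rI p ∩ rI q = ∅ ∨ ∃ r : M, rI p ∩ rI q = rI r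

namespace RightLCM

variable {M : Type*} [RightLCM M]

/-- The equivalence relation `(p,q) ∼ (pu,qu)` for units `u`. -/
def peq (x y : M × M) : Prop := ∃ u : M, IsUnit u ∧ x.1 = y.1 * u ∧ x.2 = y.2 * u

theorem peq_equivalence : Equivalence (peq (M := M)) := by
  constructor
  · intro x; exact ⟨1, isUnit_one, by simp, by simp⟩
  · rintro x y ⟨u, hu, h1, h2⟩
    obtain ⟨w, hw⟩ := hu
    subst hw
    exact ⟨↑w⁻¹, Units.isUnit _, by rw [h1, mul_assoc, w.mul_inv, mul_one],
      by rw [h2, mul_assoc, w.mul_inv, mul_one]⟩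
  · rintro x y z ⟨u, hu, h1, h2⟩ ⟨v, hv, h3, h4⟩
    exact ⟨v * u, hv.mul hu, by rw [h1, h3, mul_assoc], by rw [h2, h4, mul_assoc]⟩

instance pSetoid : Setoid (M × M) := ⟨peq, peq_equivalence⟩

/-- The inverse semigroup `S = {[p,q] : p,q ∈ P} ∪ {0}` associated to a right LCM monoid. -/
abbrev S (M : Type*) [RightLCM M] := WithZero (Quotient (pSetoid (M := M)))

/-- The class `[p,q]` as an element of `S M`. -/
def cls (p q : M) : S M := (Quotient.mk (pSetoid (M := M)) (p, q) : Quotient (pSetoid (M := M)))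

open scoped Classical in
/-- Product of two representatives: `[a,b][c,d] = [ab', dc']` when `bP ∩ cP = rP` with
`bb' = cc' = r`, and `0` when `bP ∩ cP = ∅`. -/
noncomputable def mulPair (x y : M × M) : S M :=
  if h : rI x.2 ∩ rI y.1 = ∅ then 0
  else
    have hr := (RightLCM.lcm x.2 y.1).resolve_left h
    have hmem : Classical.choose hr ∈ rI x.2 ∩ rI y.1 :=
      (Set.ext_iff.mp (Classical.choose_spec hr) _).mpr ⟨1, (mul_one _).symm⟩
    cls (x.1 * Classical.choose hmem.1) (y.2 * Classical.choose hmem.2)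

/-- The multiplication on `S M` (with `0` absorbing). -/
noncomputable def smul : S M → S M → S M
  | none, _ => 0
  | some _, none => 0
  | some a, some b => mulPair a.out b.out

/-- The involution `[p,q]* = [q,p]` on `S M`. -/
noncomputable def star : S M → S M
  | none => 0
  | some a => cls a.out.2 a.out.1

end RightLCM

namespace RightLCM

variable {M : Type*} [RightLCM M]

lemma lc {a b c : M} (h : a * b = a * c) : b = c := RightLCM.mul_left_cancel' a b c h

lemma mem_rI_self (x : M) : x ∈ rI x := ⟨1, (mul_one x).symm⟩

lemma rI_mul_unit {u : M} (hu : IsUnit u) (x : M) : rI (x * u) = rI x := by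
  obtain ⟨w, rfl⟩ := hu
  ext z
  constructor
  · rintro ⟨y, rfl⟩; exact ⟨w * y, by rw [mul_assoc]⟩
  · rintro ⟨y, rfl⟩
    exact ⟨↑w⁻¹ * y, by rw [mul_assoc, ← mul_assoc (w : M), w.mul_inv, one_mul]⟩

lemma rI_eq_unit {s t : M} (h : rI s = rI t) : ∃ u : M, IsUnit u ∧ s = t * u := by
  obtain ⟨y, hy⟩ : s ∈ rI t := h ▸ mem_rI_self s
  obtain ⟨x, hx⟩ : t ∈ rI s := h.symm ▸ mem_rI_self t
  have hyx : y * x = 1 := by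
    apply lc (a := t)
    rw [← mul_assoc, ← hy, ← hx, mul_one]
  have hxy : x * y = 1 := by
    apply lc (a := s)
    rw [← mul_assoc, ← hx, ← hy, mul_one]
  exact ⟨y, ⟨⟨y, x, hyx, hxy⟩, rfl⟩, hy⟩

lemma cls_eq_iff {x y z w : M} :
    cls x y = cls z w ↔ ∃ u : M, IsUnit u ∧ x = z * u ∧ y = w * u := by
  rw [cls, cls, WithZero.coe_inj, Quotient.eq]
  rfl

lemma cls_mul_unit {u : M} (hu : IsUnit u) (x y : M) : cls (x * u) (y * u) = cls x y :=
  cls_eq_iff.mpr ⟨u, hu, rfl, rfl⟩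

lemma mulPair_spec (x y : M × M) (h : rI x.2 ∩ rI y.1 ≠ ∅) :
    ∃ b' c', x.2 * b' = y.1 * c' ∧ rI x.2 ∩ rI y.1 = rI (x.2 * b') ∧
      mulPair x y = cls (x.1 * b') (y.2 * c') := by
  rw [mulPair, dif_neg h]
  have hr := (RightLCM.lcm x.2 y.1).resolve_left h
  have hmem : Classical.choose hr ∈ rI x.2 ∩ rI y.1 :=
    (Set.ext_iff.mp (Classical.choose_spec hr) _).mpr ⟨1, (mul_one _).symm⟩
  refine ⟨Classical.choose hmem.1, Classical.choose hmem.2, ?_, ?_, rfl⟩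
  · rw [← Classical.choose_spec hmem.1, ← Classical.choose_spec hmem.2]
  · rw [← Classical.choose_spec hmem.1]; exact Classical.choose_spec hr

end RightLCM

open RightLCM in
/-- For `r = qk`, the idempotent `[r,r]` is fixed by `[p,q]` iff `pk = r = qk`. -/
theorem stmt10 {M : Type*} [RightLCM M] (p q k r : M) (hr : r = q * k) :
    smul (cls p q) (cls r r) = cls r r ↔ (p * k = r ∧ q * k = r) := by
  set A := (Quotient.mk (pSetoid (M := M)) (p, q)).out with hA
  set B := (Quotient.mk (pSetoid (M := M)) (r, r)).out with hB
  have hs : smul (cls p q) (cls r r) = mulPair A B := rfl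
  obtain ⟨u, hu, hA1, hA2⟩ : peq A (p, q) := Quotient.mk_out (p, q)
  obtain ⟨v, hv, hB1, hB2⟩ : peq B (r, r) := Quotient.mk_out (r, r)
  have hrIq : rI A.2 = rI q := hA2 ▸ rI_mul_unit hu q
  have hrIr : rI B.1 = rI r := hB1 ▸ rI_mul_unit hv r
  have hsub : rI A.2 ∩ rI B.1 = rI r := by
    rw [hrIq, hrIr, Set.inter_eq_right]
    rintro z ⟨y, rfl⟩
    exact ⟨k * y, by rw [hr, mul_assoc]⟩
  have hne : rI A.2 ∩ rI B.1 ≠ ∅ := by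
    rw [hsub]
    exact Set.nonempty_iff_ne_empty.mp ⟨r, mem_rI_self r⟩
  obtain ⟨b', c', heq, hint, hmul⟩ := mulPair_spec A B hne
  obtain ⟨w, hw, hrw⟩ : ∃ w : M, IsUnit w ∧ A.2 * b' = r * w :=
    rI_eq_unit (hint ▸ hsub)
  have hub' : u * b' = k * w := by
    apply lc (a := q)
    rw [← mul_assoc, ← hA2, hrw, hr, mul_assoc]
  have hvc' : v * c' = w := by
    apply lc (a := r)
    rw [← mul_assoc, ← hB1, ← heq, hrw]
  have key : smul (cls p q) (cls r r) = cls (p * k) r := by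
    rw [hs, hmul, hA1, hB2, mul_assoc, mul_assoc, hub', hvc', ← mul_assoc]
    exact cls_mul_unit hw (p * k) r
  rw [key]
  constructor
  · intro h
    obtain ⟨u', hu', h1, h2⟩ := cls_eq_iff.mp h
    have : u' = 1 := lc (a := r) (by rw [← h2, mul_one])
    exact ⟨by rw [h1, this, mul_one], hr.symm⟩
  · rintro ⟨h1, -⟩
    rw [h1]
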